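/- Let G be a finite connected simple graph that is not a tree (i.e., G contains at least one cycle). If every cycle of G has length at most 4, then G has no good vertex; that is, for every vertex v of G, either G − v is disconnected or W(G − v) ≠ W(G). -/

import Mathlib

open SimpleGraph

/-- The Wiener index: sum of distances over unordered pairs of vertices. -/
noncomputable def wiener {V : Type*} [Fintype V] (G : SimpleGraph V) : ℕ :=
  (∑ u : V, ∑ v : V, G.dist u v) / 2

/-- The transmission of a vertex: sum of distances to all vertices. -/
noncomputable def transmission {V : Type*} [Fintype V] (G : SimpleGraph V) (v : V) : ℕ :=
  ∑ u : V, G.dist v u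

/-- The graph `G - v`: induced subgraph on the vertices distinct from `v`. -/
def delVert {V : Type*} (G : SimpleGraph V) (v : V) : SimpleGraph {u : V // u ≠ v} :=
  SimpleGraph.comap Subtype.val G

/-- A vertex is good if `G - v` is connected and has the same Wiener index as `G`. -/
def good {V : Type*} [Fintype V] [DecidableEq V] (G : SimpleGraph V) (v : V) : Prop :=
  (delVert G v).Connected ∧ wiener (delVert G v) = wiener G

/-- The embedding-hom from `G - v` to `G`. -/
def delHom {V : Type*} (G : SimpleGraph V) (v : V) : delVert G v →g G :=
  ⟨Subtype.val, fun h => h⟩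

lemma key_lift {V : Type*} (G : SimpleGraph V) (v : V)
    (hshort : ∀ (u : V) (w : G.Walk u u), w.IsCycle → w.length ≤ 4)
    (hconn : (delVert G v).Connected) :
    ∀ (n : ℕ) (u w : V) (hu : u ≠ v) (hw : w ≠ v) (p : G.Walk u w), p.IsPath → p.length ≤ n →
    ∃ q : (delVert G v).Walk ⟨u, hu⟩ ⟨w, hw⟩, q.length ≤ p.length := by
  intro n
  induction n with
  | zero =>
    intro u w hu hw p hp hl
    have h0 : p.length = 0 := Nat.le_zero.mp hl
    have huw : u = w := SimpleGraph.Walk.eq_of_length_eq_zero h0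
    subst huw
    exact ⟨SimpleGraph.Walk.nil, by simp⟩
  | succ n ih =>
    intro u w hu hw p hp hl
    cases p with
    | nil => exact ⟨SimpleGraph.Walk.nil, by simp⟩
    | @cons _ x _ h p' =>
      by_cases hx : v = x
      · subst hx
        cases p' with
        | nil => exact absurd rfl hw
        | @cons _ b _ h2 p'' =>
          have hb : b ≠ v := h2.ne'
          have hpath'' : p''.IsPath := (hp.of_cons).of_cons
          have hub : u ≠ b := by
            rw [SimpleGraph.Walk.cons_isPath_iff] at hp
            intro hEq
            exact hp.2 (by rw [hEq]; simp)
          -- shortest path in delVert from u to b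
          obtain ⟨P, hPpath, hPdist⟩ := hconn.exists_path_of_dist ⟨u, hu⟩ ⟨b, hb⟩
          set f := delHom G v with hf
          have hfInj : Function.Injective f := Subtype.val_injective
          let Pm : G.Walk u b := P.map f
          have hPmPath : Pm.IsPath := SimpleGraph.Walk.map_isPath_of_injective hfInj hPpath
          have hvPm : v ∉ Pm.support := by
            intro hmem
            rw [show Pm.support = (P.map f).support from rfl, SimpleGraph.Walk.support_map, List.mem_map] at hmem
            obtain ⟨x, _, hx⟩ := hmem
            exact x.2 hx
          -- build the cycle u - v - b - (Pm.reverse back to u)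
          have hmidPath : (SimpleGraph.Walk.cons h2 Pm.reverse).IsPath := by
            rw [SimpleGraph.Walk.cons_isPath_iff]
            refine ⟨hPmPath.reverse, ?_⟩
            rw [SimpleGraph.Walk.support_reverse, List.mem_reverse]
            exact hvPm
          have hcyc : (SimpleGraph.Walk.cons h (SimpleGraph.Walk.cons h2 Pm.reverse)).IsCycle := by
            rw [SimpleGraph.Walk.cons_isCycle_iff]
            refine ⟨hmidPath, ?_⟩
            simp only [SimpleGraph.Walk.edges_cons, List.mem_cons]
            push_neg
            constructor
            · intro hEq
              rw [Sym2.eq_iff] at hEq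
              rcases hEq with ⟨h1, _⟩ | ⟨h1, _⟩
              · exact h.ne h1
              · exact hub h1
            · intro hmem
              have : v ∈ Pm.reverse.support :=
                SimpleGraph.Walk.snd_mem_support_of_mem_edges _ hmem
              rw [SimpleGraph.Walk.support_reverse, List.mem_reverse] at this
              exact hvPm this
          have hlen : (SimpleGraph.Walk.cons h (SimpleGraph.Walk.cons h2 Pm.reverse)).length ≤ 4 :=
            hshort u _ hcyc
          have hPm2 : Pm.length ≤ 2 := by
            simp only [SimpleGraph.Walk.length_cons, SimpleGraph.Walk.length_reverse] at hlen
            omega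
          have hPlen : P.length ≤ 2 := by
            have : Pm.length = P.length := SimpleGraph.Walk.length_map _ _
            omega
          have hl'' : p''.length ≤ n := by
            simp only [SimpleGraph.Walk.length_cons] at hl
            omega
          obtain ⟨q'', hq''⟩ := ih b w hb hw p'' hpath'' hl''
          refine ⟨P.append q'', ?_⟩
          rw [SimpleGraph.Walk.length_append]
          simp only [SimpleGraph.Walk.length_cons]
          omega
      · have hpath' : p'.IsPath := hp.of_cons
        have hl' : p'.length ≤ n := by
          simp only [SimpleGraph.Walk.length_cons] at hl
          omega
        obtain ⟨q', hq'⟩ := ih x w (fun hEq => hx hEq.symm) hw p' hpath' hl'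
        refine ⟨SimpleGraph.Walk.cons (show (delVert G v).Adj ⟨u, hu⟩ ⟨x, fun hEq => hx hEq.symm⟩ from h) q', ?_⟩
        simp only [SimpleGraph.Walk.length_cons]
        omega

lemma dist_delVert_eq {V : Type*} (G : SimpleGraph V) (v : V) (hG : G.Connected)
    (hshort : ∀ (u : V) (w : G.Walk u u), w.IsCycle → w.length ≤ 4)
    (hconn : (delVert G v).Connected) (u w : {x : V // x ≠ v}) :
    (delVert G v).dist u w = G.dist u.val w.val := by
  apply le_antisymm
  · obtain ⟨p, hp, hl⟩ := hG.exists_path_of_dist u.val w.val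
    obtain ⟨q, hq⟩ := key_lift G v hshort hconn p.length u.val w.val u.2 w.2 p hp le_rfl
    calc (delVert G v).dist u w ≤ q.length := SimpleGraph.dist_le q
      _ ≤ p.length := hq
      _ = G.dist u.val w.val := hl
  · obtain ⟨P, _, hPl⟩ := hconn.exists_path_of_dist u w
    calc G.dist u.val w.val ≤ (P.map (delHom G v)).length := SimpleGraph.dist_le _
      _ = P.length := SimpleGraph.Walk.length_map _ _
      _ = (delVert G v).dist u w := hPl

/-- If every cycle of a connected graph (that has at least one cycle) has length at most 4,
then the graph has no good vertex. -/
theorem no_good_vertex_of_cycles_le_four {V : Type*} [Fintype V] [DecidableEq V]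
    (G : SimpleGraph V) (hG : G.Connected)
    (hnotTree : ∃ (u : V) (w : G.Walk u u), w.IsCycle)
    (hshort : ∀ (u : V) (w : G.Walk u u), w.IsCycle → w.length ≤ 4) :
    ∀ v : V, ¬ good G v := by
  intro v hgood
  obtain ⟨hconn, hwiener⟩ := hgood
  set t := transmission G v with ht
  -- t is positive
  have htpos : 0 < t := by
    obtain ⟨u0⟩ := hconn.nonempty
    have hpos : 0 < G.dist v u0.val := hG.pos_dist_of_ne (fun hEq => u0.2 hEq.symm)
    calc 0 < G.dist v u0.val := hpos
      _ ≤ ∑ u : V, G.dist v u := Finset.single_le_sum (fun _ _ => Nat.zero_le _)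
        (Finset.mem_univ _)
  set s : Finset V := Finset.univ.erase v with hs
  set A : ℕ := ∑ u ∈ s, ∑ w ∈ s, G.dist u w with hA
  -- total sum splits
  have e3 : ∑ u ∈ s, G.dist u v = t := by
    have h1 : G.dist v v + ∑ u ∈ s, G.dist u v = ∑ u : V, G.dist u v :=
      Finset.add_sum_erase _ (fun u => G.dist u v) (Finset.mem_univ v)
    have h2 : ∑ u : V, G.dist u v = ∑ u : V, G.dist v u := by
      apply Finset.sum_congr rfl
      intro x _
      exact SimpleGraph.dist_comm
    rw [SimpleGraph.dist_self, zero_add] at h1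
    rw [h1, h2, ht, transmission]
  have claim1 : (∑ u : V, ∑ w : V, G.dist u w) = A + 2 * t := by
    have e2 : (∑ u : V, ∑ w : V, G.dist u w)
        = (∑ w : V, G.dist v w) + ∑ u ∈ s, ∑ w : V, G.dist u w :=
      (Finset.add_sum_erase _ (fun u => ∑ w : V, G.dist u w) (Finset.mem_univ v)).symm
    have e1 : ∀ u : V, (∑ w : V, G.dist u w) = G.dist u v + ∑ w ∈ s, G.dist u w :=
      fun u => (Finset.add_sum_erase _ (fun w => G.dist u w) (Finset.mem_univ v)).symm
    rw [e2]
    have : ∑ u ∈ s, ∑ w : V, G.dist u w = (∑ u ∈ s, G.dist u v) + A := by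
      rw [← Finset.sum_add_distrib]
      apply Finset.sum_congr rfl
      intro u _
      exact e1 u
    rw [this, e3]
    have : (∑ w : V, G.dist v w) = t := rfl
    rw [this]
    ring
  -- subtype sum equals A
  have claim2 : (∑ u : {x : V // x ≠ v}, ∑ w : {x : V // x ≠ v}, (delVert G v).dist u w) = A := by
    have hmem : ∀ x : V, x ∈ s ↔ x ≠ v := by
      intro x
      simp [hs]
    calc (∑ u : {x : V // x ≠ v}, ∑ w : {x : V // x ≠ v}, (delVert G v).dist u w)
        = ∑ u : {x : V // x ≠ v}, ∑ w : {x : V // x ≠ v}, G.dist u.val w.val := by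
          apply Finset.sum_congr rfl; intro u _
          apply Finset.sum_congr rfl; intro w _
          exact dist_delVert_eq G v hG hshort hconn u w
      _ = ∑ u : {x : V // x ≠ v}, ∑ w ∈ s, G.dist u.val w := by
          apply Finset.sum_congr rfl; intro u _
          exact (Finset.sum_subtype s hmem (fun w => G.dist u.val w)).symm
      _ = A := (Finset.sum_subtype s hmem (fun u => ∑ w ∈ s, G.dist u w)).symm
  have hw1 : wiener (delVert G v) = A / 2 := by rw [wiener, claim2]
  have hw2 : wiener G = A / 2 + t := by
    rw [wiener, claim1, Nat.add_mul_div_left _ _ (by norm_num : (0:ℕ) < 2)]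
  rw [hw1, hw2] at hwiener
  omega
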